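/- Let α > −1, 1 < p ≤ 2, 0 < δ < 1, and set w(z) = |z|^{(α+2)(p−1)(1−δ)} on the upper half plane. Then w belongs to the Bekollé class B_{p,α}, with B_{p,α}(w) ≤ C_{α,p} δ^{1−p} for a constant C_{α,p} depending only on α and p. -/

import Mathlib

open MeasureTheory ENNReal

noncomputable section

/-- The upper half plane. -/
def UHP : Set ℂ := {z | 0 < z.im}

/-- The measure `dA_α = (Im z)^α dA` on the upper half plane. -/
def measA (α : ℝ) : Measure ℂ :=
  (volume.restrict UHP).withDensity fun z => ENNReal.ofReal (z.im ^ α)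

/-- The Carleson box `Q_{[a,b)} = [a,b) × (0, b-a]`. -/
def cbox (a b : ℝ) : Set ℂ := {z | a ≤ z.re ∧ z.re < b ∧ 0 < z.im ∧ z.im ≤ b - a}

open Set

section Helpers

lemma cbox_subset_UHP (a b : ℝ) : cbox a b ⊆ UHP := fun _ hz => hz.2.2.1

lemma cbox_measurable (a b : ℝ) : MeasurableSet (cbox a b) := by
  have : cbox a b = Complex.re ⁻¹' (Set.Ico a b) ∩ Complex.im ⁻¹' (Set.Ioc 0 (b-a)) := by
    ext z; simp [cbox, Set.mem_Ico, Set.mem_Ioc, and_assoc]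
  rw [this]
  exact (Complex.measurable_re measurableSet_Ico).inter
    (Complex.measurable_im measurableSet_Ioc)

lemma preim_cbox (a b : ℝ) :
    (Complex.measurableEquivRealProd.symm) ⁻¹' (cbox a b)
      = (Set.Ico a b) ×ˢ (Set.Ioc 0 (b-a)) := by
  ext p
  simp [cbox, Complex.measurableEquivRealProd_symm_apply, Set.mem_prod, and_assoc]

lemma meas_abs_rpow (r : ℝ) : Measurable fun z : ℂ => ENNReal.ofReal (‖z‖ ^ r) := by
  fun_prop

/-- Transport an integral over the Carleson box w.r.t. `measA` to the product of lines. -/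
lemma lint_cbox (α a b : ℝ) {f : ℂ → ℝ≥0∞} (hf : Measurable f) :
    ∫⁻ z in cbox a b, f z ∂(measA α) =
    ∫⁻ p in (Set.Ico a b) ×ˢ (Set.Ioc 0 (b-a)),
      ENNReal.ofReal (p.2 ^ α) * f (Complex.measurableEquivRealProd.symm p)
      ∂((volume : Measure ℝ).prod volume) := by
  have hw : Measurable fun z : ℂ => ENNReal.ofReal (z.im ^ α) := by fun_prop
  rw [measA, restrict_withDensity (cbox_measurable a b),
    Measure.restrict_restrict (cbox_measurable a b),
    inter_eq_self_of_subset_left (cbox_subset_UHP a b),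
    lintegral_withDensity_eq_lintegral_mul _ hw hf]
  have := (Complex.volume_preserving_equiv_real_prod.symm).setLIntegral_comp_preimage_emb
    (Complex.measurableEquivRealProd.symm.measurableEmbedding)
    (fun z => ENNReal.ofReal (z.im ^ α) * f z) (cbox a b)
  rw [preim_cbox] at this
  simp only [Pi.mul_apply]
  rw [← this, ← Measure.volume_eq_prod]
  exact lintegral_congr fun p => by simp [Complex.measurableEquivRealProd_symm_apply]

/-- Tonelli, `x` outer. -/
lemma lint_prodset_xy {s t : Set ℝ} {F : ℝ × ℝ → ℝ≥0∞} (hF : Measurable F) :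
    ∫⁻ p in s ×ˢ t, F p ∂((volume : Measure ℝ).prod volume)
      = ∫⁻ x in s, ∫⁻ y in t, F (x, y) := by
  rw [← Measure.prod_restrict, lintegral_prod _ hF.aemeasurable]

/-- Tonelli, `y` outer. -/
lemma lint_prodset_yx {s t : Set ℝ} {F : ℝ × ℝ → ℝ≥0∞} (hF : Measurable F) :
    ∫⁻ p in s ×ˢ t, F p ∂((volume : Measure ℝ).prod volume)
      = ∫⁻ y in t, ∫⁻ x in s, F (x, y) := by
  rw [← Measure.prod_restrict, lintegral_prod_symm _ hF.aemeasurable]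

lemma lint_Ioc_rpow {c T : ℝ} (hc : -1 < c) (hT : 0 ≤ T) :
    ∫⁻ y in Set.Ioc 0 T, ENNReal.ofReal (y ^ c) = ENNReal.ofReal (T ^ (c+1) / (c+1)) := by
  have hc0 : (0:ℝ) < c + 1 := by linarith
  have hc1 : c + 1 ≠ 0 := ne_of_gt hc0
  rcases eq_or_lt_of_le hT with h0 | hT
  · simp [← h0, Real.zero_rpow hc1]
  · rw [← ofReal_integral_eq_lintegral_ofReal]
    · rw [← intervalIntegral.integral_of_le hT.le, integral_rpow (Or.inl hc),
        Real.zero_rpow hc1]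
      norm_num
    · exact (intervalIntegral.intervalIntegrable_rpow' hc).1
    · filter_upwards [ae_restrict_mem measurableSet_Ioc] with y hy
      exact Real.rpow_nonneg hy.1.le _

lemma lint_abs_rpow {c R : ℝ} (hc : -1 < c) (hR : 0 < R) :
    ∫⁻ x in Set.Ioo (-R) R, ENNReal.ofReal (|x| ^ c)
      ≤ ENNReal.ofReal (2 * (R ^ (c+1) / (c+1))) := by
  have hpos : ∫⁻ x in Set.Ioc 0 R, ENNReal.ofReal (|x| ^ c)
      = ENNReal.ofReal (R^(c+1)/(c+1)) := by
    rw [← lint_Ioc_rpow hc hR.le]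
    refine setLIntegral_congr_fun measurableSet_Ioc (fun y hy => ?_)
    rw [abs_of_pos hy.1]
  have hneg : ∫⁻ x in Set.Ioc (-R) 0, ENNReal.ofReal (|x| ^ c)
      = ENNReal.ofReal (R^(c+1)/(c+1)) := by
    have hpre : (Neg.neg ⁻¹' Set.Ioc (-R) 0 : Set ℝ) = Set.Ico 0 R := by
      ext x
      simp only [Set.mem_preimage, Set.mem_Ioc, Set.mem_Ico]
      constructor <;> intro h <;> constructor <;> linarith [h.1, h.2]
    have := (Measure.measurePreserving_neg (volume : Measure ℝ)).setLIntegral_comp_preimage_emb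
      (MeasurableEquiv.neg ℝ).measurableEmbedding
      (fun x => ENNReal.ofReal (|x| ^ c)) (Set.Ioc (-R) 0)
    rw [hpre] at this
    rw [← this]
    simp only [abs_neg]
    rw [restrict_Ico_eq_restrict_Ioc, hpos]
  have hc0 : (0:ℝ) < c + 1 := by linarith
  have hq : (0:ℝ) < R ^ (c+1) / (c+1) := div_pos (Real.rpow_pos_of_pos hR _) hc0
  calc ∫⁻ x in Set.Ioo (-R) R, ENNReal.ofReal (|x| ^ c)
      ≤ ∫⁻ x in Set.Ioc (-R) 0 ∪ Set.Ioc 0 R, ENNReal.ofReal (|x| ^ c) := by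
        apply lintegral_mono_set
        rw [Set.Ioc_union_Ioc_eq_Ioc (by linarith) hR.le]
        exact Set.Ioo_subset_Ioc_self
    _ ≤ _ + _ := lintegral_union_le _ _ _
    _ ≤ ENNReal.ofReal (2 * (R ^ (c+1) / (c+1))) := by
        rw [hpos, hneg, ← ENNReal.ofReal_add hq.le hq.le]
        apply ENNReal.ofReal_le_ofReal
        linarith

lemma rpow_neg_anti {x y t : ℝ} (hx : 0 < x) (hxy : x ≤ y) (ht : 0 ≤ t) :
    y ^ (-t) ≤ x ^ (-t) := by
  rw [Real.rpow_neg (by linarith), Real.rpow_neg hx.le]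
  exact inv_anti₀ (Real.rpow_pos_of_pos hx _) (Real.rpow_le_rpow hx.le hxy ht)

/-- The αarea of the Carleson box. -/
lemma measA_cbox (α a b : ℝ) (hα : -1 < α) (hab : a < b) :
    measA α (cbox a b) = ENNReal.ofReal ((b-a) * ((b-a) ^ (α+1) / (α+1))) := by
  have h1 : measA α (cbox a b) = ∫⁻ z in cbox a b, 1 ∂measA α := (setLIntegral_one _).symm
  rw [h1, lint_cbox α a b measurable_const, lint_prodset_xy (by fun_prop)]
  simp only [mul_one]
  have hL : (0:ℝ) ≤ b - a := by linarith
  calc ∫⁻ x in Set.Ico a b, ∫⁻ y in Set.Ioc 0 (b-a), ENNReal.ofReal (y ^ α)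
      = ∫⁻ _ in Set.Ico a b, ENNReal.ofReal ((b-a) ^ (α+1) / (α+1)) := by
        refine lintegral_congr fun x => ?_
        exact lint_Ioc_rpow hα hL
    _ = ENNReal.ofReal ((b-a) ^ (α+1) / (α+1)) * volume (Set.Ico a b) := setLIntegral_const _ _
    _ = ENNReal.ofReal ((b-a) * ((b-a) ^ (α+1) / (α+1))) := by
        rw [Real.volume_Ico,
          ← ENNReal.ofReal_mul (div_nonneg (Real.rpow_nonneg (by linarith) _) (by linarith))]
        ring_nf

/-- Near-origin bound for the singular integral. -/
lemma I2_near {α t e a b : ℝ} (hα : -1 < α) (hab : a < b)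
    (ht : 0 < t) (he : 0 < e) (hte : t + e = α + 2)
    (hA : a < b - a) (hB : -(b-a) < b) :
    ∫⁻ z in cbox a b, ENNReal.ofReal (‖z‖ ^ (-t)) ∂measA α ≤
      ENNReal.ofReal (2 * ((2*(b-a)) ^ e / e) / (α+1) + 2 * ((b-a) ^ e / e)) := by
  set L := b - a with hLdef
  have hL : 0 < L := by simp only [hLdef]; linarith
  have hα1 : (0:ℝ) < α + 1 := by linarith
  have he1 : (-1:ℝ) < e - 1 := by linarith
  -- the two majorants
  set S : Set (ℝ × ℝ) := {p | p.2 ≤ |p.1|} with hSdef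
  have hSm : MeasurableSet S := measurableSet_le measurable_snd measurable_fst.abs
  set f₁ : ℝ × ℝ → ℝ≥0∞ := fun p => ENNReal.ofReal (|p.1| ^ (-t) * p.2 ^ α) with hf₁def
  set f₂ : ℝ × ℝ → ℝ≥0∞ := fun p => ENNReal.ofReal (p.2 ^ (α - t)) with hf₂def
  have hf₁m : Measurable f₁ := by fun_prop
  have hf₂m : Measurable f₂ := by fun_prop
  have hg₁m : Measurable (S.indicator f₁) := hf₁m.indicator hSm
  have hg₂m : Measurable (Sᶜ.indicator f₂) := hf₂m.indicator hSm.compl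
  -- transport and pointwise bound
  rw [lint_cbox α a b (meas_abs_rpow (-t))]
  have hpoint : ∀ p ∈ (Set.Ico a b) ×ˢ (Set.Ioc 0 L),
      ENNReal.ofReal (p.2 ^ α) *
        ENNReal.ofReal (‖Complex.measurableEquivRealProd.symm p‖ ^ (-t))
      ≤ S.indicator f₁ p + Sᶜ.indicator f₂ p := by
    rintro ⟨x, y⟩ ⟨hx, hy⟩
    have hy0 : 0 < y := hy.1
    set z : ℂ := Complex.measurableEquivRealProd.symm (x, y) with hzdef
    have hzre : z.re = x := rfl
    have hzim : z.im = y := rfl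
    have habs_re : |x| ≤ ‖z‖ := by rw [← hzre]; exact Complex.abs_re_le_norm z
    have habs_im : y ≤ ‖z‖ := by
      calc y = |z.im| := by rw [hzim, abs_of_pos hy0]
        _ ≤ ‖z‖ := Complex.abs_im_le_norm z
    by_cases hcase : y ≤ |x|
    · have e1 : S.indicator f₁ (x, y) = f₁ (x, y) :=
        Set.indicator_of_mem (by simpa [hSdef] using hcase) _
      have e2 : Sᶜ.indicator f₂ (x, y) = 0 :=
        Set.indicator_of_notMem (by simpa [hSdef] using hcase) _
      rw [e1, e2, add_zero]
      have hx0 : 0 < |x| := lt_of_lt_of_le hy0 hcase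
      have h1 : ‖z‖ ^ (-t) ≤ |x| ^ (-t) := rpow_neg_anti hx0 habs_re ht.le
      rw [← ENNReal.ofReal_mul (Real.rpow_nonneg hy0.le _)]
      apply ENNReal.ofReal_le_ofReal
      calc y ^ α * ‖z‖ ^ (-t) ≤ y ^ α * |x| ^ (-t) :=
            mul_le_mul_of_nonneg_left h1 (Real.rpow_nonneg hy0.le _)
        _ = |x| ^ (-t) * y ^ α := mul_comm _ _
    · have e1 : S.indicator f₁ (x, y) = 0 :=
        Set.indicator_of_notMem (by simpa [hSdef] using hcase) _
      have e2 : Sᶜ.indicator f₂ (x, y) = f₂ (x, y) :=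
        Set.indicator_of_mem (by simpa [hSdef] using hcase) _
      rw [e1, e2, zero_add]
      have h1 : ‖z‖ ^ (-t) ≤ y ^ (-t) := rpow_neg_anti hy0 habs_im ht.le
      rw [← ENNReal.ofReal_mul (Real.rpow_nonneg hy0.le _)]
      apply ENNReal.ofReal_le_ofReal
      calc y ^ α * ‖z‖ ^ (-t) ≤ y ^ α * y ^ (-t) :=
            mul_le_mul_of_nonneg_left h1 (Real.rpow_nonneg hy0.le _)
        _ = y ^ (α - t) := by rw [sub_eq_add_neg, Real.rpow_add hy0]
  have hT1 : ∫⁻ p in (Set.Ico a b) ×ˢ (Set.Ioc 0 L), S.indicator f₁ p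
      ∂((volume : Measure ℝ).prod volume)
      ≤ ENNReal.ofReal (2 * ((2*L) ^ e / e) / (α+1)) := by
    rw [lint_prodset_xy hg₁m]
    have hinner : ∀ x : ℝ, ∫⁻ y in Set.Ioc 0 L, S.indicator f₁ (x, y)
        ≤ ENNReal.ofReal (|x| ^ (e-1) / (α+1)) := by
      intro x
      have hrw : ∀ y : ℝ, S.indicator f₁ (x, y)
          = (Set.Iic |x|).indicator (fun y => ENNReal.ofReal (|x| ^ (-t) * y ^ α)) y := by
        intro y
        by_cases h : y ≤ |x| <;> simp [Set.indicator_apply, hSdef, hf₁def, h]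
      simp only [hrw]
      rw [lintegral_indicator measurableSet_Iic, Measure.restrict_restrict measurableSet_Iic]
      have hsub : Set.Iic |x| ∩ Set.Ioc 0 L ⊆ Set.Ioc 0 |x| := fun y hy => ⟨hy.2.1, hy.1⟩
      refine le_trans (lintegral_mono_set hsub) ?_
      have hmul : ∀ y : ℝ, ENNReal.ofReal (|x| ^ (-t) * y ^ α)
          = ENNReal.ofReal (|x| ^ (-t)) * ENNReal.ofReal (y ^ α) :=
        fun y => ENNReal.ofReal_mul (Real.rpow_nonneg (abs_nonneg x) _)
      simp only [hmul]
      rw [lintegral_const_mul' _ _ ENNReal.ofReal_ne_top, lint_Ioc_rpow hα (abs_nonneg x)]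
      rcases eq_or_ne x 0 with h0 | h0
      · simp [h0, Real.zero_rpow (neg_ne_zero.2 (ne_of_gt ht))]
      · have hx0 : 0 < |x| := abs_pos.2 h0
        rw [← ENNReal.ofReal_mul (Real.rpow_nonneg (abs_nonneg x) _)]
        apply ENNReal.ofReal_le_ofReal
        have hxx : |x| ^ (-t) * |x| ^ (α+1) = |x| ^ (e-1) := by
          rw [← Real.rpow_add hx0]; congr 1; linarith
        rw [← mul_div_assoc, hxx]
    refine le_trans (setLIntegral_mono (by fun_prop) (fun x _ => hinner x)) ?_
    have hsub2 : Set.Ico a b ⊆ Set.Ioo (-(2*L)) (2*L) := by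
      intro x hx
      constructor
      · have := hx.1; simp only [hLdef] at *; linarith
      · have := hx.2; simp only [hLdef] at *; linarith
    refine le_trans (lintegral_mono_set hsub2) ?_
    have hmul2 : ∀ x : ℝ, ENNReal.ofReal (|x| ^ (e-1) / (α+1))
        = ENNReal.ofReal (1/(α+1)) * ENNReal.ofReal (|x| ^ (e-1)) := by
      intro x
      rw [← ENNReal.ofReal_mul (one_div_nonneg.2 hα1.le)]
      congr 1; ring
    simp only [hmul2]
    rw [lintegral_const_mul' _ _ ENNReal.ofReal_ne_top]
    refine le_trans (mul_le_mul_right (lint_abs_rpow he1 (by linarith)) _) ?_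
    rw [← ENNReal.ofReal_mul (one_div_nonneg.2 hα1.le)]
    apply ENNReal.ofReal_le_ofReal
    rw [show e - 1 + 1 = e by ring]
    apply le_of_eq; ring
  have hT2 : ∫⁻ p in (Set.Ico a b) ×ˢ (Set.Ioc 0 L), Sᶜ.indicator f₂ p
      ∂((volume : Measure ℝ).prod volume)
      ≤ ENNReal.ofReal (2 * (L ^ e / e)) := by
    rw [lint_prodset_yx hg₂m]
    have hinner : ∀ y ∈ Set.Ioc 0 L, ∫⁻ x in Set.Ico a b, Sᶜ.indicator f₂ (x, y)
        ≤ ENNReal.ofReal (2 * y ^ (e-1)) := by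
      intro y hy
      have hy0 : 0 < y := hy.1
      have hrw : ∀ x : ℝ, Sᶜ.indicator f₂ (x, y)
          = (Set.Ioo (-y) y).indicator (fun _ => ENNReal.ofReal (y ^ (α - t))) x := by
        intro x
        have hiff : ((x, y) ∈ Sᶜ) ↔ (x ∈ Set.Ioo (-y) y) := by
          simp [hSdef, Set.mem_Ioo, not_le, abs_lt]
        by_cases h : (x, y) ∈ Sᶜ
        · rw [Set.indicator_of_mem h, Set.indicator_of_mem (hiff.1 h)]
        · rw [Set.indicator_of_notMem h, Set.indicator_of_notMem (fun hc => h (hiff.2 hc))]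
      simp only [hrw]
      rw [lintegral_indicator measurableSet_Ioo, Measure.restrict_restrict measurableSet_Ioo]
      refine le_trans (lintegral_mono_set Set.inter_subset_left) ?_
      rw [setLIntegral_const, Real.volume_Ioo,
        ← ENNReal.ofReal_mul (Real.rpow_nonneg hy0.le _)]
      apply ENNReal.ofReal_le_ofReal
      rw [show y - -y = 2*y by ring]
      have hyy : y ^ (α - t) * (2*y) = 2 * y ^ (e-1) := by
        rw [show e - 1 = (α - t) + 1 by linarith, Real.rpow_add hy0, Real.rpow_one]
        ring
      exact le_of_eq hyy
    refine le_trans (setLIntegral_mono (by fun_prop) hinner) ?_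
    have hmul : ∀ y : ℝ, ENNReal.ofReal (2 * y ^ (e-1))
        = ENNReal.ofReal 2 * ENNReal.ofReal (y ^ (e-1)) :=
      fun y => ENNReal.ofReal_mul (by norm_num)
    simp only [hmul]
    rw [lintegral_const_mul' _ _ ENNReal.ofReal_ne_top, lint_Ioc_rpow he1 hL.le,
      ← ENNReal.ofReal_mul (by norm_num)]
    apply ENNReal.ofReal_le_ofReal
    rw [show e - 1 + 1 = e by ring]
  have hb1 : (0:ℝ) ≤ 2 * ((2*L) ^ e / e) / (α+1) :=
    div_nonneg (mul_nonneg (by norm_num) (div_nonneg (Real.rpow_nonneg (by linarith) _) he.le))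
      hα1.le
  have hb2 : (0:ℝ) ≤ 2 * (L ^ e / e) :=
    mul_nonneg (by norm_num) (div_nonneg (Real.rpow_nonneg hL.le _) he.le)
  calc ∫⁻ p in (Set.Ico a b) ×ˢ (Set.Ioc 0 L),
        ENNReal.ofReal (p.2 ^ α) *
          ENNReal.ofReal (‖Complex.measurableEquivRealProd.symm p‖ ^ (-t))
        ∂((volume : Measure ℝ).prod volume)
      ≤ ∫⁻ p in (Set.Ico a b) ×ˢ (Set.Ioc 0 L),
          (S.indicator f₁ p + Sᶜ.indicator f₂ p) ∂((volume : Measure ℝ).prod volume) :=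
        setLIntegral_mono (hg₁m.add hg₂m) hpoint
    _ = (∫⁻ p in (Set.Ico a b) ×ˢ (Set.Ioc 0 L), S.indicator f₁ p
          ∂((volume : Measure ℝ).prod volume))
        + ∫⁻ p in (Set.Ico a b) ×ˢ (Set.Ioc 0 L), Sᶜ.indicator f₂ p
          ∂((volume : Measure ℝ).prod volume) := lintegral_add_left hg₁m _
    _ ≤ ENNReal.ofReal (2 * ((2*L) ^ e / e) / (α+1)) + ENNReal.ofReal (2 * (L ^ e / e)) :=
        add_le_add hT1 hT2
    _ = ENNReal.ofReal (2 * ((2*L) ^ e / e) / (α+1) + 2 * (L ^ e / e)) :=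
        (ENNReal.ofReal_add hb1 hb2).symm

lemma one_le_rpow_neg {δ p : ℝ} (hδ0 : 0 < δ) (hδ1 : δ < 1) (hp : 1 < p) :
    (1:ℝ) ≤ δ ^ (1 - p) := by
  have := Real.rpow_le_rpow_of_exponent_ge hδ0 hδ1.le (show 1 - p ≤ 0 by linarith)
  rwa [Real.rpow_zero] at this

lemma u_rpow_le {u p : ℝ} (hu : 0 ≤ u) (hp1 : 1 < p) (hp2 : p ≤ 2) :
    u ^ (p - 1) ≤ 1 + u := by
  rcases le_or_gt u 1 with h | h
  · calc u ^ (p-1) ≤ 1 := Real.rpow_le_one hu h (by linarith)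
      _ ≤ 1 + u := by linarith
  · calc u ^ (p-1) ≤ u ^ (1:ℝ) := Real.rpow_le_rpow_of_exponent_le h.le (by linarith)
      _ = u := Real.rpow_one u
      _ ≤ 1 + u := by linarith

lemma near_algebra {αv p δ L u s t : ℝ} (hα : -1 < αv) (hp1 : 1 < p) (hp2 : p ≤ 2)
    (hδ0 : 0 < δ) (hδ1 : δ < 1) (hL : 0 < L) (hu : 0 ≤ u)
    (hs : s = (αv+2)*(p-1)*(1-δ)) (ht : t = (αv+2)*(1-δ)) :
    (3*L) ^ s * (u/δ * L ^ (-t)) ^ (p-1) ≤ (3:ℝ) ^ (αv+2) * (1+u) * δ ^ (1-p) := by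
  have hp0 : (0:ℝ) < p - 1 := by linarith
  have hs0 : 0 ≤ s := by
    rw [hs]; apply mul_nonneg (mul_nonneg (by linarith) (by linarith)) (by linarith)
  have h1 : (3*L) ^ s = 3 ^ s * L ^ s := Real.mul_rpow (by norm_num) hL.le
  have h2 : (u/δ * L ^ (-t)) ^ (p-1) = (u/δ) ^ (p-1) * L ^ (-t*(p-1)) := by
    rw [Real.mul_rpow (div_nonneg hu hδ0.le) (Real.rpow_nonneg hL.le _),
      ← Real.rpow_mul hL.le]
  have h3 : L ^ s * L ^ (-t*(p-1)) = 1 := by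
    rw [← Real.rpow_add hL, show s + -t*(p-1) = 0 by rw [hs, ht]; ring, Real.rpow_zero]
  have h4 : (u/δ) ^ (p-1) = u ^ (p-1) * δ ^ (1-p) := by
    rw [Real.div_rpow hu hδ0.le, show (1:ℝ)-p = -(p-1) by ring, Real.rpow_neg hδ0.le,
      div_eq_mul_inv]
  have h5 : u ^ (p-1) ≤ 1 + u := u_rpow_le hu hp1 hp2
  have h6 : (3:ℝ) ^ s ≤ 3 ^ (αv+2) := by
    apply Real.rpow_le_rpow_of_exponent_le (by norm_num)
    rw [hs]
    nlinarith [mul_nonneg (show (0:ℝ) ≤ p - 1 by linarith) (show (0:ℝ) ≤ δ by linarith),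
      mul_nonneg (show (0:ℝ) ≤ 2 - p by linarith) (show (0:ℝ) ≤ 1 - δ by linarith)]
  calc (3*L) ^ s * (u/δ * L ^ (-t)) ^ (p-1)
      = (3 ^ s * u ^ (p-1) * δ ^ (1-p)) * (L ^ s * L ^ (-t*(p-1))) := by
        rw [h1, h2, h4]; ring
    _ = 3 ^ s * u ^ (p-1) * δ ^ (1-p) := by rw [h3, mul_one]
    _ ≤ 3 ^ (αv+2) * (1+u) * δ ^ (1-p) := by
        apply mul_le_mul_of_nonneg_right _ (Real.rpow_nonneg hδ0.le _)
        exact mul_le_mul h6 h5 (Real.rpow_nonneg hu _) (Real.rpow_nonneg (by norm_num) _)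

lemma far_algebra {αv p δ m s t : ℝ} (hα : -1 < αv) (hp1 : 1 < p) (hp2 : p ≤ 2)
    (hδ0 : 0 < δ) (hδ1 : δ < 1) (hm : 0 < m) {u : ℝ} (hu : 0 ≤ u)
    (hs : s = (αv+2)*(p-1)*(1-δ)) (ht : t = (αv+2)*(1-δ)) :
    (3*m) ^ s * (m ^ (-t)) ^ (p-1) ≤ (3:ℝ) ^ (αv+2) * (1+u) * δ ^ (1-p) := by
  have hp0 : (0:ℝ) < p - 1 := by linarith
  have hs0 : 0 ≤ s := by
    rw [hs]; apply mul_nonneg (mul_nonneg (by linarith) (by linarith)) (by linarith)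
  have h1 : (3*m) ^ s = 3 ^ s * m ^ s := Real.mul_rpow (by norm_num) hm.le
  have h2 : (m ^ (-t)) ^ (p-1) = m ^ (-t*(p-1)) := by rw [← Real.rpow_mul hm.le]
  have h3 : m ^ s * m ^ (-t*(p-1)) = 1 := by
    rw [← Real.rpow_add hm, show s + -t*(p-1) = 0 by rw [hs, ht]; ring, Real.rpow_zero]
  have h6 : (3:ℝ) ^ s ≤ 3 ^ (αv+2) := by
    apply Real.rpow_le_rpow_of_exponent_le (by norm_num)
    rw [hs]
    nlinarith [mul_nonneg (show (0:ℝ) ≤ p - 1 by linarith) (show (0:ℝ) ≤ δ by linarith),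
      mul_nonneg (show (0:ℝ) ≤ 2 - p by linarith) (show (0:ℝ) ≤ 1 - δ by linarith)]
  have h7 : (1:ℝ) ≤ δ ^ (1-p) := one_le_rpow_neg hδ0 hδ1 hp1
  have h30 : (0:ℝ) < 3 ^ (αv+2) := Real.rpow_pos_of_pos (by norm_num) _
  calc (3*m) ^ s * (m ^ (-t)) ^ (p-1) = 3 ^ s * (m ^ s * m ^ (-t*(p-1))) := by
        rw [h1, h2]; ring
    _ = 3 ^ s := by rw [h3, mul_one]
    _ ≤ 3 ^ (αv+2) := h6
    _ ≤ 3 ^ (αv+2) * (1+u) * δ ^ (1-p) := by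
        have h8 : (1:ℝ) * 1 ≤ (1+u) * δ ^ (1-p) :=
          mul_le_mul (by linarith) h7 zero_le_one (by linarith)
        nlinarith [mul_le_mul_of_nonneg_left h8 h30.le]

end Helpers

set_option maxHeartbeats 1000000 in
/-- for `1 < p ≤ 2` and `0 < δ < 1`, the weight
`w(z) = |z|^{(α+2)(p-1)(1-δ)}` lies in `B_{p,α}` with `B_{p,α}(w) ≤ C_{α,p} δ^{1-p}`:
for every interval `I = [a,b)`,
`(|Q_I|_{w,α}/|Q_I|_α)(|Q_I|_{w^{1-p'},α}/|Q_I|_α)^{p-1} ≤ C_{α,p} δ^{1-p}`. -/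
theorem power_weight_in_Bp (α p : ℝ) (hα : -1 < α) (hp1 : 1 < p) (hp2 : p ≤ 2) :
    ∃ C > 0, ∀ δ : ℝ, 0 < δ → δ < 1 → ∀ a b : ℝ, a < b →
      ((∫⁻ z in cbox a b,
            ENNReal.ofReal (‖z‖ ^ ((α + 2) * (p - 1) * (1 - δ))) ∂measA α) /
          measA α (cbox a b)) *
        (((∫⁻ z in cbox a b,
            ENNReal.ofReal
              (‖z‖ ^ ((α + 2) * (p - 1) * (1 - δ) * (1 - p / (p - 1)))) ∂measA α) /
          measA α (cbox a b)) ^ (p - 1)) ≤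
        ENNReal.ofReal (C * δ ^ (1 - p)) := by
  have hα1 : (0:ℝ) < α + 1 := by linarith
  have hα2 : (0:ℝ) < α + 2 := by linarith
  have hp0 : (0:ℝ) < p - 1 := by linarith
  obtain ⟨K, hK_def⟩ : ∃ K : ℝ, K = 2 * 2 ^ (α+2) / (α+1) + 2 := ⟨_, rfl⟩
  have hK : 0 < K := by
    have h1 : (0:ℝ) < 2 ^ (α+2) := Real.rpow_pos_of_pos (by norm_num) _
    have h2 : (0:ℝ) < 2 * 2 ^ (α+2) / (α+1) := by positivity
    rw [hK_def]; linarith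
  obtain ⟨u, hu_def⟩ : ∃ u : ℝ, u = K * (α+1) / (α+2) := ⟨_, rfl⟩
  have hu : 0 < u := by rw [hu_def]; positivity
  have h30 : (0:ℝ) < 3 ^ (α+2) := Real.rpow_pos_of_pos (by norm_num) _
  refine ⟨3 ^ (α+2) * (1 + u), by positivity, ?_⟩
  intro δ hδ0 hδ1 a b hab
  set L : ℝ := b - a with hL_def
  have hL : 0 < L := by simp only [hL_def]; linarith
  set s : ℝ := (α + 2) * (p - 1) * (1 - δ) with hs_def
  set t : ℝ := (α + 2) * (1 - δ) with ht_def
  set e : ℝ := (α + 2) * δ with he_def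
  have ht : 0 < t := by
    rw [ht_def]; exact mul_pos hα2 (by linarith)
  have he : 0 < e := by rw [he_def]; exact mul_pos hα2 hδ0
  have hte : t + e = α + 2 := by rw [ht_def, he_def]; ring
  have hs0 : 0 ≤ s := by
    rw [hs_def]; exact mul_nonneg (mul_nonneg hα2.le (by linarith)) (by linarith)
  have hexp : s * (1 - p / (p - 1)) = -t := by
    rw [hs_def, ht_def]; field_simp; ring
  rw [hexp]
  -- the measure of the box
  have hQ : measA α (cbox a b) = ENNReal.ofReal (L * (L ^ (α+1) / (α+1))) := by
    rw [measA_cbox α a b hα hab]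
  set q : ℝ := L * (L ^ (α+1) / (α+1)) with hq_def
  have hq0 : 0 < q := by
    rw [hq_def]
    exact mul_pos hL (div_pos (Real.rpow_pos_of_pos hL _) hα1)
  -- generic average bound
  have havg : ∀ r A : ℝ, 0 ≤ A → (∀ z ∈ cbox a b, ‖z‖ ^ r ≤ A) →
      (∫⁻ z in cbox a b, ENNReal.ofReal (‖z‖ ^ r) ∂measA α) / measA α (cbox a b)
        ≤ ENNReal.ofReal A := by
    intro r A hA hbound
    apply ENNReal.div_le_of_le_mul
    calc ∫⁻ z in cbox a b, ENNReal.ofReal (‖z‖ ^ r) ∂measA α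
        ≤ ∫⁻ _ in cbox a b, ENNReal.ofReal A ∂measA α :=
          setLIntegral_mono measurable_const
            (fun z hz => ENNReal.ofReal_le_ofReal (hbound z hz))
      _ = ENNReal.ofReal A * measA α (cbox a b) := setLIntegral_const _ _
  by_cases hfar : L ≤ a ∨ b ≤ -L
  · -- far case
    obtain ⟨m, hm, hlow, hhigh⟩ :
        ∃ m : ℝ, 0 < m ∧ (∀ z ∈ cbox a b, m ≤ ‖z‖) ∧
          (∀ z ∈ cbox a b, ‖z‖ ≤ 3*m) := by
      rcases hfar with h | h
      · refine ⟨a, by linarith, fun z hz => ?_, fun z hz => ?_⟩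
        · calc a ≤ z.re := hz.1
            _ ≤ |z.re| := le_abs_self _
            _ ≤ ‖z‖ := Complex.abs_re_le_norm z
        · have h1 : |z.re| ≤ 2*a := by
            rw [abs_le]; constructor
            · have := hz.1; simp only [hL_def] at h; linarith
            · have := hz.2.1; simp only [hL_def] at h ⊢; linarith
          have h2 : |z.im| ≤ a := by
            rw [abs_le]; constructor
            · have := hz.2.2.1; linarith
            · have := hz.2.2.2; simp only [hL_def] at h ⊢; linarith
          calc ‖z‖ ≤ |z.re| + |z.im| := Complex.norm_le_abs_re_add_abs_im z
            _ ≤ 3*a := by linarith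
      · refine ⟨-b, by simp only [hL_def] at h; linarith, fun z hz => ?_, fun z hz => ?_⟩
        · calc -b ≤ -z.re := by have := hz.2.1; linarith
            _ ≤ |z.re| := neg_le_abs _
            _ ≤ ‖z‖ := Complex.abs_re_le_norm z
        · have h1 : |z.re| ≤ 2*(-b) := by
            rw [abs_le]; constructor
            · have := hz.1; simp only [hL_def] at h ⊢; linarith
            · have := hz.2.1; simp only [hL_def] at h; linarith
          have h2 : |z.im| ≤ -b := by
            rw [abs_le]; constructor
            · have := hz.2.2.1; linarith
            · have := hz.2.2.2; simp only [hL_def] at h ⊢; linarith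
          calc ‖z‖ ≤ |z.re| + |z.im| := Complex.norm_le_abs_re_add_abs_im z
            _ ≤ 3*(-b) := by linarith
    have havg1 := havg s ((3*m) ^ s) (Real.rpow_nonneg (by linarith) _)
      (fun z hz => Real.rpow_le_rpow (norm_nonneg z) (hhigh z hz) hs0)
    have havg2 := havg (-t) (m ^ (-t)) (Real.rpow_nonneg hm.le _)
      (fun z hz => rpow_neg_anti hm (hlow z hz) ht.le)
    calc _ ≤ ENNReal.ofReal ((3*m) ^ s) * (ENNReal.ofReal (m ^ (-t))) ^ (p-1) :=
          mul_le_mul' havg1 (ENNReal.rpow_le_rpow havg2 hp0.le)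
      _ = ENNReal.ofReal ((3*m) ^ s * (m ^ (-t)) ^ (p-1)) := by
          rw [ENNReal.ofReal_rpow_of_nonneg (Real.rpow_nonneg hm.le _) hp0.le,
            ← ENNReal.ofReal_mul (Real.rpow_nonneg (by linarith) _)]
      _ ≤ ENNReal.ofReal (3 ^ (α+2) * (1 + u) * δ ^ (1-p)) :=
          ENNReal.ofReal_le_ofReal
            (far_algebra hα hp1 hp2 hδ0 hδ1 hm hu.le hs_def ht_def)
      _ = ENNReal.ofReal (3 ^ (α+2) * (1 + u) * δ ^ (1-p)) := rfl
  · -- near case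
    push_neg at hfar
    obtain ⟨hA, hB⟩ := hfar
    have havg1 := havg s ((3*L) ^ s) (Real.rpow_nonneg (by linarith) _)
      (fun z hz => by
        apply Real.rpow_le_rpow (norm_nonneg z) _ hs0
        have h1 : |z.re| ≤ 2*L := by
          rw [abs_le]; constructor
          · have := hz.1; simp only [hL_def] at hB ⊢; linarith
          · have := hz.2.1; simp only [hL_def] at hA ⊢; linarith
        have h2 : |z.im| ≤ L := by
          rw [abs_le]; constructor
          · have := hz.2.2.1; linarith
          · exact hz.2.2.2
        calc ‖z‖ ≤ |z.re| + |z.im| := Complex.norm_le_abs_re_add_abs_im z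
          _ ≤ 3*L := by linarith)
    -- the singular average
    have hLpow : L ^ (-t) * L * L ^ (α+1) = L ^ e := by
      rw [show L ^ (-t) * L = L ^ (-t+1) from by
          rw [Real.rpow_add hL, Real.rpow_one],
        ← Real.rpow_add hL]
      congr 1; linarith
    have hBq : (u/δ * L ^ (-t)) * q = K * (L ^ e / e) := by
      rw [hq_def, hu_def, he_def, ← hLpow]
      field_simp
    have hB0 : 0 ≤ u/δ * L ^ (-t) :=
      mul_nonneg (div_nonneg hu.le hδ0.le) (Real.rpow_nonneg hL.le _)
    have havg2 : (∫⁻ z in cbox a b, ENNReal.ofReal (‖z‖ ^ (-t)) ∂measA α) /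
        measA α (cbox a b) ≤ ENNReal.ofReal (u/δ * L ^ (-t)) := by
      apply ENNReal.div_le_of_le_mul
      rw [hQ, ← ENNReal.ofReal_mul hB0]
      refine le_trans (I2_near hα hab ht he hte hA hB) (ENNReal.ofReal_le_ofReal ?_)
      rw [hBq]
      -- 2*((2L)^e/e)/(α+1) + 2*(L^e/e) ≤ K * (L^e/e)
      have h2L : (2*L) ^ e = 2 ^ e * L ^ e := Real.mul_rpow (by norm_num) hL.le
      have h2e : (2:ℝ) ^ e ≤ 2 ^ (α+2) := by
        apply Real.rpow_le_rpow_of_exponent_le one_le_two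
        rw [he_def]; nlinarith
      have hP : 0 ≤ L ^ e / e := div_nonneg (Real.rpow_nonneg hL.le _) he.le
      rw [h2L, hK_def]
      clear hBq
      have key : 2 ^ e * (L ^ e / e) ≤ 2 ^ (α+2) * (L ^ e / e) :=
        mul_le_mul_of_nonneg_right h2e hP
      have expand1 : 2*(2 ^ e * L ^ e/e)/(α+1) = (2/(α+1)) * (2 ^ e * (L ^ e / e)) := by
        field_simp
      have expand2 : (2 * 2 ^ (α+2) / (α+1) + 2) * (L ^ e / e)
          = (2/(α+1)) * (2 ^ (α+2) * (L ^ e / e)) + 2 * (L ^ e / e) := by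
        field_simp
      rw [expand1, expand2]
      have h2a : (0:ℝ) ≤ 2/(α+1) := by positivity
      nlinarith [mul_le_mul_of_nonneg_left key h2a]
    calc _ ≤ ENNReal.ofReal ((3*L) ^ s) * (ENNReal.ofReal (u/δ * L ^ (-t))) ^ (p-1) :=
          mul_le_mul' havg1 (ENNReal.rpow_le_rpow havg2 hp0.le)
      _ = ENNReal.ofReal ((3*L) ^ s * (u/δ * L ^ (-t)) ^ (p-1)) := by
          rw [ENNReal.ofReal_rpow_of_nonneg hB0 hp0.le,
            ← ENNReal.ofReal_mul (Real.rpow_nonneg (by linarith) _)]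
      _ ≤ ENNReal.ofReal (3 ^ (α+2) * (1 + u) * δ ^ (1-p)) :=
          ENNReal.ofReal_le_ofReal
            (near_algebra hα hp1 hp2 hδ0 hδ1 hL hu.le hs_def ht_def)
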